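/- For all positive integers a, b, n with b ≥ 2 and b not dividing na, the fractional part {na/b} equals 1/2 - (1/(2b)) · Σ_{m=1}^{b-1} cot(πm/b) · sin(2πmn·a/b). -/

import Mathlib

open Real Finset


lemma sum_cos_eq_zero (b j : ℕ) (hb : 0 < b) (h : ¬ b ∣ j) :
    ∑ m ∈ Finset.range b, Real.cos (2*π*m*j/b) = 0 := by
  have hb0 : (b:ℝ) ≠ 0 := Nat.cast_ne_zero.mpr hb.ne'
  have hprim := Complex.isPrimitiveRoot_exp b hb.ne'
  set e : ℂ := Complex.exp (2 * π * Complex.I / b) with he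
  have hz1 : e ^ j ≠ 1 := by
    intro h1; exact h ((hprim.pow_eq_one_iff_dvd j).mp h1)
  have hsum : ∑ m ∈ Finset.range b, (e ^ j) ^ m = 0 := by
    rw [geom_sum_eq hz1]
    rw [← pow_mul, mul_comm j b, pow_mul, hprim.pow_eq_one, one_pow]
    simp
  have hre : ∀ m : ℕ, ((e ^ j) ^ m).re = Real.cos (2*π*m*j/b) := by
    intro m
    rw [← pow_mul, he, ← Complex.exp_nat_mul]
    have : (↑(j*m) : ℂ) * (2 * ↑π * Complex.I / ↑b) = ((2*π*m*j/b : ℝ) : ℂ) * Complex.I := by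
      push_cast; field_simp
    rw [this, Complex.exp_ofReal_mul_I_re]
  calc ∑ m ∈ Finset.range b, Real.cos (2*π*m*j/b)
      = (∑ m ∈ Finset.range b, (e ^ j) ^ m).re := by
        rw [Complex.re_sum]; exact Finset.sum_congr rfl fun m _ => (hre m).symm
    _ = 0 := by rw [hsum]; rfl

lemma cot_mul_sin_telescope (θ : ℝ) (hs : Real.sin θ ≠ 0) (k : ℕ) :
    Real.cot θ * Real.sin (2*k*θ) =
      ∑ j ∈ Finset.range k, (Real.cos (2*j*θ) + Real.cos (2*(j+1)*θ)) := by
  induction k with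
  | zero => simp
  | succ k ih =>
    rw [Finset.sum_range_succ, ← ih]
    have h1 : (2*(k+1:ℕ):ℝ)*θ = 2*(k:ℝ)*θ + 2*θ := by push_cast; ring
    push_cast
    have h1 : (2*((k:ℝ)+1))*θ = 2*(k:ℝ)*θ + 2*θ := by ring
    rw [h1, Real.sin_add, Real.cos_add, Real.cot_eq_cos_div_sin,
      Real.sin_two_mul, Real.cos_two_mul']
    generalize Real.sin (2*(k:ℝ)*θ) = S
    generalize Real.cos (2*(k:ℝ)*θ) = C
    field_simp
    linear_combination (Real.cos θ * S + Real.sin θ * C) * (Real.sin_sq_add_cos_sq θ)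



lemma key_sum (b r : ℕ) (hb : 2 ≤ b) (hr1 : 1 ≤ r) (hr2 : r ≤ b - 1) :
    ∑ m ∈ Finset.Icc 1 (b-1), Real.cot (π*m/b) * Real.sin (2*π*m*r/b)
      = (b:ℝ) - 2*r := by
  have hbpos : 0 < b := by omega
  have hb0 : (b:ℝ) ≠ 0 := Nat.cast_ne_zero.mpr hbpos.ne'
  set C : ℕ → ℝ := fun j => ∑ m ∈ Finset.Icc 1 (b-1), Real.cos (2*π*m*j/b) with hC
  have hcard : (Finset.Icc 1 (b-1)).card = b - 1 := by
    rw [Nat.card_Icc]; omega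
  have hC0 : C 0 = (b:ℝ) - 1 := by
    have h1 : ∀ m ∈ Finset.Icc 1 (b-1), Real.cos (2*π*(m:ℝ)*((0:ℕ):ℝ)/b) = 1 := by
      intro m _; norm_num
    simp only [hC]
    rw [Finset.sum_congr rfl h1, Finset.sum_const, hcard, nsmul_eq_mul, mul_one]
    push_cast [Nat.cast_sub (show 1 ≤ b by omega)]
    ring
  have hCj : ∀ j : ℕ, 1 ≤ j → j ≤ b - 1 → C j = -1 := by
    intro j hj1 hj2
    have hnd : ¬ b ∣ j := Nat.not_dvd_of_pos_of_lt (by omega) (by omega)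
    have h0 := sum_cos_eq_zero b j hbpos hnd
    rw [Finset.range_eq_Ico, Finset.sum_eq_sum_Ico_succ_bot hbpos] at h0
    have hIco : Finset.Ico (0+1) b = Finset.Icc 1 (b-1) := by
      ext x; simp only [Finset.mem_Ico, Finset.mem_Icc]; omega
    rw [hIco] at h0
    have : Real.cos (2*π*(0:ℕ)*j/b) = 1 := by norm_num
    rw [this] at h0
    simp only [hC]
    linarith
  have hterm : ∀ m ∈ Finset.Icc 1 (b-1),
      Real.cot (π*m/b) * Real.sin (2*π*m*r/b)
        = ∑ j ∈ Finset.range r, (Real.cos (2*π*m*j/b) + Real.cos (2*π*m*(j+1)/b)) := by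
    intro m hm
    simp only [Finset.mem_Icc] at hm
    have hmb : (m:ℝ) < b := by
      have : m < b := by omega
      exact_mod_cast this
    have hm1 : (1:ℝ) ≤ m := by exact_mod_cast hm.1
    have hsin : Real.sin (π*m/b) ≠ 0 := by
      apply ne_of_gt
      apply Real.sin_pos_of_pos_of_lt_pi
      · positivity
      · rw [div_lt_iff₀ (by positivity)]
        nlinarith [Real.pi_pos]
    have h1 : (2*π*m*r/b : ℝ) = 2*(r:ℕ)*(π*m/b) := by ring
    rw [h1, cot_mul_sin_telescope _ hsin r]
    apply Finset.sum_congr rfl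
    intro j _
    have e1 : (2*(j:ℝ)*(π*m/b)) = 2*π*m*j/b := by ring
    have e2 : (2*((j:ℝ)+1)*(π*m/b)) = 2*π*m*((j:ℝ)+1)/b := by ring
    rw [e1, e2]
  rw [Finset.sum_congr rfl hterm, Finset.sum_comm]
  have hswap : ∀ j ∈ Finset.range r,
      (∑ m ∈ Finset.Icc 1 (b-1), (Real.cos (2*π*m*j/b) + Real.cos (2*π*m*(j+1)/b)))
        = C j + C (j+1) := by
    intro j _
    rw [Finset.sum_add_distrib]
    congr 1
    simp only [hC]
    push_cast
    rfl
  rw [Finset.sum_congr rfl hswap]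
  obtain ⟨s, rfl⟩ : ∃ s, r = s + 1 := ⟨r - 1, by omega⟩
  rw [Finset.sum_range_succ']
  have h1 : ∀ j ∈ Finset.range s, C (j+1) + C (j+1+1) = -2 := by
    intro j hj
    simp only [Finset.mem_range] at hj
    rw [hCj (j+1) (by omega) (by omega), hCj (j+1+1) (by omega) (by omega)]
    norm_num
  rw [Finset.sum_congr rfl h1, hC0, hCj 1 le_rfl (by omega), Finset.sum_const, Finset.card_range]
  push_cast
  ring



theorem fract_eq_cot_sum (a b n : ℕ) (ha : 0 < a) (hn : 0 < n) (hb : 2 ≤ b)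
    (hnd : ¬ b ∣ n * a) :
    Int.fract ((n * a : ℝ) / b) =
      1 / 2 - (1 / (2 * b)) * ∑ m ∈ Finset.Icc 1 (b - 1),
        Real.cot (π * m / b) * Real.sin (2 * π * m * n * (a / b)) := by
  have hbpos : 0 < b := by omega
  have hb0 : (b:ℝ) ≠ 0 := Nat.cast_ne_zero.mpr hbpos.ne'
  set q := (n * a) / b with hq
  set r := (n * a) % b with hr
  have hrpos : 1 ≤ r := by
    rcases Nat.eq_zero_or_pos r with h | h
    · exact absurd (Nat.dvd_of_mod_eq_zero h) hnd
    · exact h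
  have hrlt : r < b := Nat.mod_lt _ hbpos
  have hNe : n * a = b * q + r := (Nat.div_add_mod (n*a) b).symm
  have hna : (n:ℝ) * a = b*q + r := by exact_mod_cast congrArg (Nat.cast (R := ℝ)) hNe
  have hL : Int.fract (((n:ℝ) * a)/b) = (r:ℝ) / b := by
    rw [hna]
    have h1 : ((b:ℝ)*q + r)/b = ((q:ℤ):ℝ) + (r:ℝ)/b := by
      push_cast; field_simp
    rw [h1, Int.fract_intCast_add, Int.fract_eq_self.mpr
      ⟨by positivity, by rw [div_lt_one (by positivity)]; exact_mod_cast hrlt⟩]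
  have hterm : ∀ m ∈ Finset.Icc 1 (b-1),
      Real.cot (π*m/b) * Real.sin (2*π*m*n*((a:ℝ)/b))
        = Real.cot (π*m/b) * Real.sin (2*π*m*r/b) := by
    intro m _
    congr 1
    have h2 : (2*π*(m:ℝ)*n*((a:ℝ)/b)) = 2*π*m*r/b + ((m*q : ℕ):ℤ)*(2*π) := by
      push_cast
      field_simp
      linear_combination (m:ℝ) * hna
    rw [h2, Real.sin_add_int_mul_two_pi]
  rw [hL, Finset.sum_congr rfl hterm, key_sum b r hb hrpos (by omega)]
  field_simp
  ring
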